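/- (Theorem 1, equation (9)) Let Y^(0), Y^(1), ..., Y^(K) be i.i.d. random trajectories, each a random element of (ℝ^d)^{T+1}, writing Y^(i) = (Y^(i)_0,...,Y^(i)_T). For each t ∈ {0,...,T−1} let h_t : (ℝ^d)^{t+1} → ℝ^d be a measurable predictor and set ŷ^(i)_{t+1|t} := h_t(Y^(i)_0,...,Y^(i)_t). Let δ ∈ (0,1), δ̄ := δ/T, p := ⌈(K+1)(1−δ̄)⌉, and for each t define R^(i)_{t+1|t} := ‖Y^(i)_{t+1} − ŷ^(i)_{t+1|t}‖ for i = 1,...,K and let C_{t+1|t} be the p-th smallest element of the list (R^(1)_{t+1|t},...,R^(K)_{t+1|t},+∞). Then P(‖Y^(0)_{t+1} − ŷ^(0)_{t+1|t}‖ ≤ C_{t+1|t} for all t ∈ {0,...,T−1}) ≥ 1 − δ. -/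

import Mathlib

open MeasureTheory ProbabilityTheory

/-- The `p`-th smallest element (1-indexed) of the list consisting of the `K` extended-real
scores `R 1, ..., R K` together with `+∞`. -/
noncomputable def conformalBound (K : ℕ) (R : Fin K → EReal) (p : ℕ) : EReal :=
  (@List.insertionSort EReal (· ≤ ·) (Classical.decRel _)
    (((List.finRange K).map R) ++ [⊤])).getD (p - 1) ⊤

lemma countP_finRange (n : ℕ) (q : Fin n → Prop) [DecidablePred q] :
    (List.finRange n).countP (fun i => decide (q i)) = (Finset.univ.filter q).card := by
  rw [List.countP_eq_length_filter, ← List.toFinset_card_of_nodup ((List.nodup_finRange n).filter _)]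
  congr 1; ext i; simp

lemma det_le_conformalBound (K p : ℕ) (S : Fin (K+1) → EReal)
    (hcard : (Finset.univ.filter (fun j => S j < S 0)).card < p) :
    S 0 ≤ conformalBound K (fun i => S i.succ) p := by
  classical
  set L : List EReal := ((List.finRange K).map (fun i => S i.succ)) ++ [⊤] with hL
  set M : List EReal := @List.insertionSort EReal (· ≤ ·) (Classical.decRel _) L with hM
  by_cases hlen : M.length ≤ p - 1
  · rw [conformalBound, List.getD_eq_default _ _ hlen]
    exact le_top
  push_neg at hlen
  rw [conformalBound, List.getD_eq_getElem _ _ hlen]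
  by_contra h'
  push_neg at h'
  have hsort : M.Pairwise (· ≤ ·) := @List.pairwise_insertionSort EReal (· ≤ ·) (Classical.decRel _) _ _ L
  have hp1 : 1 ≤ p := Nat.pos_of_ne_zero (by rintro rfl; omega)
  have hplen : p ≤ M.length := by omega
  have htake : ∀ x ∈ M.take p, x < S 0 := by
    intro x hx
    rw [List.mem_take_iff_getElem] at hx
    obtain ⟨q, hq, rfl⟩ := hx
    have hq' : q < p := by omega
    have hql : q < M.length := by omega
    have : M[q] ≤ M[p-1] := by
      rcases eq_or_lt_of_le (by omega : q ≤ p - 1) with hqe | hql2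
      · exact le_of_eq (by congr 1)
      · exact List.Pairwise.rel_get_of_lt hsort (a := ⟨q, hql⟩) (b := ⟨p-1, hlen⟩) (by simpa using hql2)
    exact lt_of_le_of_lt this h'
  have hcount1 : p ≤ M.countP (fun x => decide (x < S 0)) := by
    have := List.countP_eq_length (p := fun x => decide (x < S 0)) (l := M.take p)
    have h1 : (M.take p).countP (fun x => decide (x < S 0)) = (M.take p).length := by
      rw [List.countP_eq_length]
      intro a ha; simpa using htake a ha
    calc p = (M.take p).length := by simp [hplen]
      _ = (M.take p).countP _ := h1.symm
      _ ≤ M.countP _ := by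
          conv_rhs => rw [← List.take_append_drop p M]
          rw [List.countP_append]; omega
  have hperm : M.countP (fun x => decide (x < S 0)) = L.countP (fun x => decide (x < S 0)) :=
    (@List.perm_insertionSort EReal (· ≤ ·) (Classical.decRel _) L).countP_eq _
  have hcount2 : L.countP (fun x => decide (x < S 0))
      = (Finset.univ.filter (fun i : Fin K => S i.succ < S 0)).card := by
    have htop : ¬ ((⊤ : EReal) < S 0) := by simp
    rw [hL, List.countP_append, List.countP_map, List.countP_singleton]
    simp only [Function.comp_def]
    rw [countP_finRange]
    simp [htop]
  have hsub : (Finset.univ.filter (fun i : Fin K => S i.succ < S 0)).card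
      ≤ (Finset.univ.filter (fun j : Fin (K+1) => S j < S 0)).card := by
    apply Finset.card_le_card_of_injOn (fun i => i.succ)
    · intro i hi; simp at hi ⊢; exact hi
    · intro a _ b _ hab; exact Fin.succ_injective _ hab
  omega

lemma rank_count (K p : ℕ) (hpK : p ≤ K + 1) (S : Fin (K+1) → EReal) :
    p ≤ (Finset.univ.filter
      (fun i => (Finset.univ.filter (fun j => S j < S i)).card < p)).card := by
  classical
  set σ := Tuple.sort S with hσ
  have hmono : Monotone (S ∘ σ) := Tuple.monotone_sort S
  have hgood : ∀ m : Fin (K+1), (m : ℕ) < p →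
      (Finset.univ.filter (fun j => S j < S (σ m))).card < p := by
    intro m hm
    have hsub : (Finset.univ.filter (fun j => S j < S (σ m)))
        ⊆ (Finset.univ.filter (fun l : Fin (K+1) => (l : ℕ) < (m : ℕ))).image σ := by
      intro j hj
      simp only [Finset.mem_filter, Finset.mem_univ, true_and] at hj
      simp only [Finset.mem_image, Finset.mem_filter, Finset.mem_univ, true_and]
      refine ⟨σ.symm j, ?_, by simp⟩
      by_contra hge
      push_neg at hge
      have : S (σ m) ≤ S (σ (σ.symm j)) := hmono (Fin.le_def.mpr hge)
      simp only [Equiv.apply_symm_apply] at this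
      exact absurd hj (not_lt.mpr this)
    calc (Finset.univ.filter (fun j => S j < S (σ m))).card
        ≤ ((Finset.univ.filter (fun l : Fin (K+1) => (l : ℕ) < (m : ℕ))).image σ).card :=
          Finset.card_le_card hsub
      _ ≤ (Finset.univ.filter (fun l : Fin (K+1) => (l : ℕ) < (m : ℕ))).card :=
          Finset.card_image_le
      _ ≤ m := by
          apply le_of_eq
          conv_rhs => rw [← Finset.card_range (m : ℕ)]
          refine Finset.card_bij (fun a _ => (a : ℕ)) ?_ ?_ ?_
          · intro a ha; simp only [Finset.mem_filter, Finset.mem_univ, true_and] at ha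
            simpa using ha
          · intro a _ b _ hab; exact Fin.val_injective hab
          · intro b hb; simp only [Finset.mem_range] at hb
            exact ⟨⟨b, by omega⟩, by simp only [Finset.mem_filter, Finset.mem_univ, true_and]; exact hb, rfl⟩
      _ < p := hm
  have himg : ((Finset.univ.filter (fun m : Fin (K+1) => (m : ℕ) < p)).image σ)
      ⊆ Finset.univ.filter (fun i => (Finset.univ.filter (fun j => S j < S i)).card < p) := by
    intro i hi
    simp only [Finset.mem_image, Finset.mem_filter, Finset.mem_univ, true_and] at hi ⊢
    obtain ⟨m, hm, rfl⟩ := hi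
    exact hgood m hm
  calc p = (Finset.univ.filter (fun m : Fin (K+1) => (m : ℕ) < p)).card := by
        conv_lhs => rw [← Finset.card_range p]
        symm
        refine Finset.card_bij (fun a _ => (a : ℕ)) ?_ ?_ ?_
        · intro a ha; simp only [Finset.mem_filter, Finset.mem_univ, true_and] at ha
          simpa using ha
        · intro a _ b _ hab; exact Fin.val_injective hab
        · intro b hb; simp only [Finset.mem_range] at hb
          exact ⟨⟨b, by omega⟩, by simpa using hb, rfl⟩
    _ = ((Finset.univ.filter (fun m : Fin (K+1) => (m : ℕ) < p)).image σ).card :=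
        (Finset.card_image_of_injective _ σ.injective).symm
    _ ≤ _ := Finset.card_le_card himg

lemma map_eq_pi {Ω α : Type*} [MeasurableSpace Ω] [MeasurableSpace α] {n : ℕ}
    (μ : Measure Ω) [IsProbabilityMeasure μ] (W : Fin n → Ω → α)
    (hW : ∀ i, Measurable (W i)) (hind : iIndepFun W μ) :
    Measure.pi (fun i => μ.map (W i)) = μ.map (fun ω i => W i ω) := by
  have : ∀ i, IsProbabilityMeasure (μ.map (W i)) :=
    fun i => Measure.isProbabilityMeasure_map (hW i).aemeasurable
  apply Measure.pi_eq
  intro s hs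
  rw [Measure.map_apply (measurable_pi_lambda _ hW) (MeasurableSet.univ_pi hs)]
  have hpre : (fun ω i => W i ω) ⁻¹' Set.pi Set.univ s = ⋂ i ∈ Finset.univ, W i ⁻¹' s i := by
    ext ω; simp [Set.mem_pi]
  rw [hpre, hind.measure_inter_preimage_eq_mul Finset.univ (fun i _ => hs i)]
  exact Finset.prod_congr rfl (fun i _ => (Measure.map_apply (hW i) (hs i)).symm)

lemma pi_map_comp_perm {α : Type*} [MeasurableSpace α] {n : ℕ}
    (m : Measure α) [IsProbabilityMeasure m] (e : Equiv.Perm (Fin n)) :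
    (Measure.pi (fun _ : Fin n => m)).map (fun v i => v (e i)) = Measure.pi (fun _ => m) := by
  symm
  apply Measure.pi_eq
  intro s hs
  have hT : Measurable (fun (v : Fin n → α) i => v (e i)) :=
    measurable_pi_lambda _ (fun i => measurable_pi_apply (e i))
  rw [Measure.map_apply hT (MeasurableSet.univ_pi hs)]
  have hpre : (fun (v : Fin n → α) i => v (e i)) ⁻¹' Set.pi Set.univ s
      = Set.pi Set.univ (fun j => s (e.symm j)) := by
    ext v
    simp only [Set.mem_preimage, Set.mem_pi, Set.mem_univ, true_implies]
    constructor
    · intro hv j; have := hv (e.symm j); simpa using this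
    · intro hv i; have := hv (e i); rwa [Equiv.symm_apply_apply] at this
  rw [hpre, Measure.pi_pi]
  exact Equiv.prod_comp e.symm (fun j => m (s j))

lemma measurableSet_G {n p : ℕ} (i : Fin n) :
    MeasurableSet {v : Fin n → EReal |
      (Finset.univ.filter (fun j => v j < v i)).card < p} := by
  classical
  have hmeas : Measurable (fun v : Fin n → EReal =>
      ∑ j : Fin n, if v j < v i then (1 : ℝ) else 0) := by
    apply Finset.measurable_sum
    intro j _
    exact Measurable.ite (measurableSet_lt (measurable_pi_apply j) (measurable_pi_apply i))
      measurable_const measurable_const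
  have hset : {v : Fin n → EReal | (Finset.univ.filter (fun j => v j < v i)).card < p}
      = (fun v : Fin n → EReal => ∑ j : Fin n, if v j < v i then (1 : ℝ) else 0) ⁻¹'
        (Set.Iio (p : ℝ)) := by
    ext v
    simp only [Set.mem_setOf_eq, Set.mem_preimage, Set.mem_Iio]
    have : ((Finset.univ.filter (fun j => v j < v i)).card : ℝ)
        = ∑ j : Fin n, if v j < v i then (1 : ℝ) else 0 := by
      rw [Finset.card_filter]; push_cast; rfl
    rw [← this]
    exact_mod_cast Iff.rfl
  rw [hset]
  exact hmeas measurableSet_Iio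

lemma step_coverage {Ω : Type*} [MeasurableSpace Ω] (μ : Measure Ω) [IsProbabilityMeasure μ]
    {n : ℕ} (W : Fin (n+1) → Ω → EReal) (hW : ∀ i, Measurable (W i))
    (hind : iIndepFun W μ)
    (hid : ∀ i, μ.map (W i) = μ.map (W 0))
    (p : ℕ) (hpn : p ≤ n + 1) :
    (p : ENNReal) / (n + 1) ≤
      μ {ω | (Finset.univ.filter (fun j => W j ω < W 0 ω)).card < p} := by
  classical
  set V : Ω → (Fin (n+1) → EReal) := fun ω i => W i ω with hV
  have hVmeas : Measurable V := measurable_pi_lambda _ hW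
  set G : Fin (n+1) → Set (Fin (n+1) → EReal) :=
    fun i => {v | (Finset.univ.filter (fun j => v j < v i)).card < p} with hG
  have hGmeas : ∀ i, MeasurableSet (G i) := fun i => measurableSet_G i
  set E : Fin (n+1) → Set Ω := fun i => V ⁻¹' G i with hE
  have hEmeas : ∀ i, MeasurableSet (E i) := fun i => hVmeas (hGmeas i)
  have hmap : μ.map V = Measure.pi (fun _ => μ.map (W 0)) := by
    rw [← map_eq_pi μ W hW hind]
    congr 1
    exact funext (fun i => hid i)
  have hprob : IsProbabilityMeasure (μ.map (W 0)) :=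
    Measure.isProbabilityMeasure_map (hW 0).aemeasurable
  have hexch : ∀ i, μ (E i) = μ (E 0) := by
    intro i
    have h1 : μ (E i) = (μ.map V) (G i) :=
      (Measure.map_apply hVmeas (hGmeas i)).symm
    have h2 : μ (E 0) = (μ.map V) (G 0) :=
      (Measure.map_apply hVmeas (hGmeas 0)).symm
    rw [h1, h2, hmap]
    set e : Equiv.Perm (Fin (n+1)) := Equiv.swap 0 i with he
    have hTpre : (fun (v : Fin (n+1) → EReal) j => v (e j)) ⁻¹' G 0 = G i := by
      ext v
      simp only [Set.mem_preimage, hG, Set.mem_setOf_eq]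
      have h0 : e 0 = i := Equiv.swap_apply_left 0 i
      have hcardeq : (Finset.univ.filter (fun j => v (e j) < v (e 0))).card
          = (Finset.univ.filter (fun j => v j < v i)).card := by
        rw [h0]
        refine Finset.card_bij (fun a _ => e a) ?_ ?_ ?_
        · intro a ha; simp only [Finset.mem_filter, Finset.mem_univ, true_and] at ha ⊢
          exact ha
        · intro a _ b _ hab; exact e.injective hab
        · intro b hb; simp only [Finset.mem_filter, Finset.mem_univ, true_and] at hb
          exact ⟨e.symm b, by simpa using hb, by simp⟩
      omega
    calc (Measure.pi (fun _ => μ.map (W 0))) (G i)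
        = (Measure.pi (fun _ => μ.map (W 0)))
            ((fun (v : Fin (n+1) → EReal) j => v (e j)) ⁻¹' G 0) := by rw [hTpre]
      _ = ((Measure.pi (fun _ => μ.map (W 0))).map (fun v j => v (e j))) (G 0) :=
          (Measure.map_apply (measurable_pi_lambda _ (fun j => measurable_pi_apply (e j)))
            (hGmeas 0)).symm
      _ = (Measure.pi (fun _ : Fin (n+1) => μ.map (W 0))) (G 0) := by
          rw [pi_map_comp_perm]
  have hsum : (p : ENNReal) ≤ ∑ i : Fin (n+1), μ (E i) := by
    have hpt : ∀ ω, (p : ENNReal) ≤ ∑ i : Fin (n+1), (E i).indicator (fun _ => 1) ω := by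
      intro ω
      have hcard := rank_count n p hpn (fun j => W j ω)
      have : ∑ i : Fin (n+1), (E i).indicator (fun _ => (1:ENNReal)) ω
          = ((Finset.univ.filter (fun i => ω ∈ E i)).card : ENNReal) := by
        rw [Finset.card_filter]
        push_cast
        refine Finset.sum_congr rfl (fun i _ => ?_)
        simp [Set.indicator_apply]
      rw [this]
      have hsame : (Finset.univ.filter (fun i => ω ∈ E i))
          = (Finset.univ.filter
              (fun i => (Finset.univ.filter (fun j => W j ω < W i ω)).card < p)) := by
        apply Finset.filter_congr
        intro i _
        simp [hE, hG, hV]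
      rw [hsame]
      exact_mod_cast hcard
    calc (p : ENNReal) = ∫⁻ _, (p : ENNReal) ∂μ := by simp
      _ ≤ ∫⁻ ω, ∑ i : Fin (n+1), (E i).indicator (fun _ => 1) ω ∂μ :=
          lintegral_mono hpt
      _ = ∑ i : Fin (n+1), ∫⁻ ω, (E i).indicator (fun _ => 1) ω ∂μ :=
          lintegral_finset_sum _ (fun i _ => measurable_const.indicator (hEmeas i))
      _ = ∑ i : Fin (n+1), μ (E i) := by
          refine Finset.sum_congr rfl (fun i _ => ?_)
          simp [lintegral_indicator_const (hEmeas i)]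
  have hsum' : (p : ENNReal) ≤ (n + 1) * μ (E 0) := by
    calc (p : ENNReal) ≤ ∑ i : Fin (n+1), μ (E i) := hsum
      _ = ∑ _i : Fin (n+1), μ (E 0) := Finset.sum_congr rfl (fun i _ => hexch i)
      _ = (n + 1) * μ (E 0) := by simp [Finset.sum_const, mul_comm]
  exact ENNReal.div_le_of_le_mul' hsum'

/-- **Theorem 1, equation (9): simultaneous validity of all one-step-ahead prediction
regions.** With `δ̄ := δ/T` and `p = ⌈(K+1)(1-δ̄)⌉`, the one-step-ahead predictions
`ŷ_{t+1|t} i = h t (Y i 0, ..., Y i t)` and conformal bounds `C t` (the `p`-th smallest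
element of the nonconformity scores of the validation trajectories together with `+∞`)
satisfy `P(∀ t ∈ {0,...,T-1}, ‖Y 0 (t+1) - ŷ_{t+1|t} 0‖ ≤ C t) ≥ 1 - δ`. -/
theorem conformal_onestep_coverage
    {Ω : Type*} [MeasurableSpace Ω] (μ : Measure Ω) [IsProbabilityMeasure μ]
    (d T K : ℕ) (hT : 1 ≤ T)
    (Y : Fin (K + 1) → Ω → (Fin (T + 1) → EuclideanSpace ℝ (Fin d)))
    (hmeas : ∀ i, Measurable (Y i))
    (hindep : iIndepFun Y μ)
    (hident : ∀ i, Measure.map (Y i) μ = Measure.map (Y 0) μ)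
    (h : (t : ℕ) → (Fin (t + 1) → EuclideanSpace ℝ (Fin d)) → EuclideanSpace ℝ (Fin d))
    (hmeash : ∀ t, Measurable (h t))
    (δ : ℝ) (hδ : δ ∈ Set.Ioo (0 : ℝ) 1)
    (p : ℕ) (hp : p = ⌈((K : ℝ) + 1) * (1 - δ / T)⌉₊)
    (C : ℕ → Ω → EReal)
    (hC : ∀ t, ∀ (htT : t ≤ T - 1) (ω : Ω), C t ω =
      conformalBound K
        (fun i => ((‖Y i.succ ω ⟨t + 1, by omega⟩ -
          h t (fun s => Y i.succ ω ⟨s.1, by have := s.isLt; omega⟩)‖ : ℝ) : EReal))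
        p) :
    ENNReal.ofReal (1 - δ) ≤
      μ {ω | ∀ t, ∀ htT : t ≤ T - 1,
        ((‖Y 0 ω ⟨t + 1, by omega⟩ -
          h t (fun s => Y 0 ω ⟨s.1, by have := s.isLt; omega⟩)‖ : ℝ) : EReal) ≤ C t ω} := by
  classical
  obtain ⟨hδ0, hδ1⟩ := hδ
  have hT0 : (0:ℝ) < T := by exact_mod_cast Nat.lt_of_lt_of_le Nat.zero_lt_one hT
  have hT1 : (1:ℝ) ≤ T := by exact_mod_cast hT
  have hδT0 : 0 < δ / T := div_pos hδ0 hT0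
  have hδT1 : δ / T < 1 := lt_of_le_of_lt (div_le_self hδ0.le hT1) hδ1
  have hp1 : 1 ≤ p := by
    rw [hp]
    have hpos : (0:ℝ) < ((K:ℝ) + 1) * (1 - δ / T) := by nlinarith
    exact Nat.ceil_pos.mpr hpos
  have hpK : p ≤ K + 1 := by
    rw [hp]
    apply Nat.ceil_le.mpr
    push_cast
    nlinarith
  -- score functions
  set f : Fin T → (Fin (T+1) → EuclideanSpace ℝ (Fin d)) → EReal :=
    fun t v => ((‖v ⟨t.1 + 1, by have := t.isLt; omega⟩ -
      h t.1 (fun s => v ⟨s.1, by have := s.isLt; have := t.isLt; omega⟩)‖ : ℝ) : EReal) with hf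
  have hfmeas : ∀ t, Measurable (f t) := by
    intro t
    apply measurable_coe_real_ereal.comp
    apply Measurable.norm
    apply Measurable.sub
    · exact measurable_pi_apply _
    · exact (hmeash t.1).comp (measurable_pi_lambda _ (fun s => measurable_pi_apply _))
  set W : Fin T → Fin (K+1) → Ω → EReal := fun t j ω => f t (Y j ω) with hW
  have hWmeas : ∀ t j, Measurable (W t j) := fun t j => (hfmeas t).comp (hmeas j)
  have hWind : ∀ t, iIndepFun (W t) μ :=
    fun t => hindep.comp (fun _ => f t) (fun _ => hfmeas t)
  have hWid : ∀ t i, μ.map (W t i) = μ.map (W t 0) := by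
    intro t i
    have h1 : μ.map (W t i) = (μ.map (Y i)).map (f t) :=
      (Measure.map_map (hfmeas t) (hmeas i)).symm
    have h2 : μ.map (W t 0) = (μ.map (Y 0)).map (f t) :=
      (Measure.map_map (hfmeas t) (hmeas 0)).symm
    rw [h1, h2, hident i]
  set E : Fin T → Set Ω :=
    fun t => {ω | (Finset.univ.filter (fun j => W t j ω < W t 0 ω)).card < p} with hE
  have hEmeas : ∀ t, MeasurableSet (E t) := by
    intro t
    have : E t = (fun ω (j : Fin (K+1)) => W t j ω) ⁻¹'
        {v | (Finset.univ.filter (fun j => v j < v (0 : Fin (K+1)))).card < p} := rfl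
    rw [this]
    exact (measurable_pi_lambda _ (fun j => hWmeas t j)) (measurableSet_G 0)
  -- per-step coverage
  have hcov : ∀ t, ENNReal.ofReal (1 - δ / T) ≤ μ (E t) := by
    intro t
    have hstep := step_coverage μ (W t) (hWmeas t) (hWind t) (hWid t) p hpK
    refine le_trans ?_ hstep
    have hle : ((K:ℝ) + 1) * (1 - δ / T) ≤ p := by
      rw [hp]; exact Nat.le_ceil _
    rw [ENNReal.le_div_iff_mul_le (Or.inl (by simp)) (Or.inl (by simp))]
    have hcast : ((K : ENNReal) + 1) = ENNReal.ofReal ((K:ℝ) + 1) := by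
      rw [ENNReal.ofReal_add (by positivity) zero_le_one]
      simp [ENNReal.ofReal_natCast]
    rw [hcast, ← ENNReal.ofReal_mul (by nlinarith)]
    calc ENNReal.ofReal ((1 - δ / T) * ((K:ℝ) + 1))
        ≤ ENNReal.ofReal (p : ℝ) := ENNReal.ofReal_le_ofReal (by nlinarith)
      _ = (p : ENNReal) := ENNReal.ofReal_natCast p
  -- complement bound
  have hcompl : ∀ t, μ (E t)ᶜ ≤ ENNReal.ofReal (δ / T) := by
    intro t
    rw [prob_compl_eq_one_sub (hEmeas t)]
    have heq : ENNReal.ofReal (δ / T) = 1 - ENNReal.ofReal (1 - δ / T) := by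
      rw [show (1:ENNReal) = ENNReal.ofReal 1 by simp,
        ← ENNReal.ofReal_sub _ (by nlinarith)]
      norm_num
    rw [heq]
    exact tsub_le_tsub_left (hcov t) 1
  -- subset of the target event
  have hsubdet : ∀ t : Fin T, E t ⊆ {ω |
      ((‖Y 0 ω ⟨t.1 + 1, by have := t.isLt; omega⟩ -
        h t.1 (fun s => Y 0 ω ⟨s.1, by have := s.isLt; have := t.isLt; omega⟩)‖ : ℝ) : EReal)
        ≤ C t.1 ω} := by
    intro t ω hω
    simp only [Set.mem_setOf_eq]
    have htT : t.1 ≤ T - 1 := by have := t.isLt; omega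
    rw [hC t.1 htT ω]
    exact det_le_conformalBound K p (fun j => W t j ω) hω
  -- assemble
  set X : Set Ω := ⋂ t : Fin T, E t with hX
  have hXmeas : MeasurableSet X := MeasurableSet.iInter (fun t => hEmeas t)
  have hXsub : X ⊆ {ω | ∀ t, ∀ htT : t ≤ T - 1,
      ((‖Y 0 ω ⟨t + 1, by omega⟩ -
        h t (fun s => Y 0 ω ⟨s.1, by have := s.isLt; omega⟩)‖ : ℝ) : EReal) ≤ C t ω} := by
    intro ω hω
    simp only [Set.mem_setOf_eq]
    intro t htT
    have ht' : t < T := by omega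
    exact hsubdet ⟨t, ht'⟩ (Set.mem_iInter.mp hω ⟨t, ht'⟩)
  have hXc : μ Xᶜ ≤ ENNReal.ofReal δ := by
    have h1 : Xᶜ = ⋃ t : Fin T, (E t)ᶜ := by
      rw [hX, Set.compl_iInter]
    rw [h1]
    calc μ (⋃ t : Fin T, (E t)ᶜ) ≤ ∑' t : Fin T, μ (E t)ᶜ := measure_iUnion_le _
      _ = ∑ t : Fin T, μ (E t)ᶜ := tsum_fintype _
      _ ≤ ∑ _t : Fin T, ENNReal.ofReal (δ / T) :=
          Finset.sum_le_sum (fun t _ => hcompl t)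
      _ = (T : ENNReal) * ENNReal.ofReal (δ / T) := by
          simp [Finset.sum_const, mul_comm]
      _ = ENNReal.ofReal δ := by
          rw [show (T : ENNReal) = ENNReal.ofReal (T : ℝ) by simp [ENNReal.ofReal_natCast],
            ← ENNReal.ofReal_mul (by positivity)]
          congr 1
          field_simp
  calc ENNReal.ofReal (1 - δ) = 1 - ENNReal.ofReal δ := by
        rw [show (1:ENNReal) = ENNReal.ofReal 1 by simp,
          ← ENNReal.ofReal_sub _ hδ0.le]
      _ ≤ 1 - μ Xᶜ := tsub_le_tsub_left hXc 1
      _ = 1 - (1 - μ X) := by rw [prob_compl_eq_one_sub hXmeas]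
      _ = μ X := ENNReal.sub_sub_cancel (by simp) prob_le_one
      _ ≤ _ := measure_mono hXsub
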